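/- arXiv:2010.09357 — 2 statements merged into one kernel-verified Lean document; each statement's English description precedes it below -/
import Mathlib

section
/- Let 0 < r < 1 and let M := ([0, 1] × {0}) ∪ {(0, r), (1, r)} ⊆ ℝ², equipped with the Euclidean metric. Set x = (1, 0), y = (0, 0), u = (1, r) and v = (0, r). Then: (a) x and y are connectable (indeed the map t ↦ (t, 0) is a 1-Lipschitz curve from [0, 1] into M joining y to x); (b) every z ∈ M with ‖u − z‖ + ‖z − v‖ = ‖u − v‖ satisfies z = u or z = v; (c) ‖x − u‖ + ‖y − v‖ = 2r < 2 = ‖x − y‖ + ‖u − v‖. (Consequently, in the Lipschitz-free space over M, the molecule m_{x,y} is a Δ-point which is not a Daugavet point.) -/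
/-- The point `(a, b)` of the Euclidean plane `ℝ²` (with the `ℓ₂`-norm). -/
noncomputable def pt (a b : ℝ) : WithLp 2 (ℝ × ℝ) :=
  (WithLp.equiv 2 (ℝ × ℝ)).symm (a, b)

/-- The metric space `M = ([0,1] × {0}) ∪ {(0,r), (1,r)} ⊆ ℝ²`. -/
noncomputable def Mset (r : ℝ) : Set (WithLp 2 (ℝ × ℝ)) :=
  ((fun t => pt t 0) '' Set.Icc 0 1) ∪ {pt 0 r, pt 1 r}

lemma dist_pt (a b c d : ℝ) :
    dist (pt a b) (pt c d) = Real.sqrt ((a - c) ^ 2 + (b - d) ^ 2) := by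
  rw [WithLp.prod_dist_eq_of_L2]
  simp [pt, Real.dist_eq, sq_abs]

/-- With `x = (1,0)`, `y = (0,0)`, `u = (1,r)`, `v = (0,r)`:
(a) `x` and `y` are connectable in `M`;
(b) the metric segment from `u` to `v` in `M` is `{u, v}`;
(c) `‖x-u‖ + ‖y-v‖ = 2r < 2 = ‖x-y‖ + ‖u-v‖`.
Hence `m_{x,y}` is a Δ-point of `F(M)` which is not a Daugavet point. -/
theorem delta_not_daugavet_example (r : ℝ) (hr0 : 0 < r) (hr1 : r < 1) :
    (∀ ε : ℝ, 0 < ε → ∃ γ : ℝ → WithLp 2 (ℝ × ℝ),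
      LipschitzOnWith 1 γ (Set.Icc 0 (dist (pt 1 0) (pt 0 0) + ε)) ∧
      (∀ t ∈ Set.Icc (0 : ℝ) (dist (pt 1 0) (pt 0 0) + ε), γ t ∈ Mset r) ∧
      γ 0 = pt 0 0 ∧ γ (dist (pt 1 0) (pt 0 0) + ε) = pt 1 0) ∧
    (∀ z ∈ Mset r, dist (pt 1 r) z + dist z (pt 0 r) = dist (pt 1 r) (pt 0 r) →
      z = pt 1 r ∨ z = pt 0 r) ∧
    (dist (pt 1 0) (pt 1 r) + dist (pt 0 0) (pt 0 r) = 2 * r ∧ 2 * r < 2 ∧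
      dist (pt 1 0) (pt 0 0) + dist (pt 1 r) (pt 0 r) = 2) := by
  have hxy : dist (pt 1 0) (pt 0 0) = 1 := by rw [dist_pt]; norm_num
  have huv : dist (pt 1 r) (pt 0 r) = 1 := by rw [dist_pt]; norm_num
  have hxu : dist (pt 1 0) (pt 1 r) = r := by
    rw [dist_pt]; simp [Real.sqrt_sq_eq_abs, abs_of_pos hr0]
  have hyv : dist (pt 0 0) (pt 0 r) = r := by
    rw [dist_pt]; simp [Real.sqrt_sq_eq_abs, abs_of_pos hr0]
  refine ⟨?_, ?_, by rw [hxu, hyv]; ring, by linarith, by rw [hxy, huv]; norm_num⟩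
  · intro ε hε
    refine ⟨fun t => pt (min t 1) 0, ?_, ?_, ?_, ?_⟩
    · apply LipschitzWith.lipschitzOnWith
      apply LipschitzWith.of_dist_le_mul
      intro s t
      rw [dist_pt, Real.dist_eq]
      simp only [sub_zero, one_mul, Real.sqrt_sq_eq_abs,
        add_zero, ne_eq, OfNat.ofNat_ne_zero, not_false_eq_true, zero_pow,
        NNReal.coe_one, one_mul]
      calc |min s 1 - min t 1| ≤ max |s - t| |(1:ℝ) - 1| := abs_min_sub_min_le_max s 1 t 1
        _ = |s - t| := by simp
    · intro t ht
      left
      exact ⟨min t 1, ⟨le_min ht.1 zero_le_one, min_le_right _ _⟩, rfl⟩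
    · norm_num
    · rw [hxy]
      show pt (min (1 + ε) 1) 0 = pt 1 0
      rw [min_eq_right (by linarith)]
  · intro z hz hsum
    rcases hz with ⟨t, ht, rfl⟩ | hz
    · exfalso
      rw [dist_pt, dist_pt, huv] at hsum
      have h1 : |1 - t| < Real.sqrt ((1 - t) ^ 2 + (r - 0) ^ 2) := by
        rw [← Real.sqrt_sq_eq_abs]
        apply Real.sqrt_lt_sqrt (sq_nonneg _)
        nlinarith
      have h2 : |t| < Real.sqrt ((t - 0) ^ 2 + (0 - r) ^ 2) := by
        rw [← Real.sqrt_sq_eq_abs]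
        apply Real.sqrt_lt_sqrt (sq_nonneg _)
        nlinarith
      have h3 : (1 : ℝ) ≤ |1 - t| + |t| := by
        calc (1:ℝ) = |1 - t + t| := by norm_num
          _ ≤ |1 - t| + |t| := abs_add_le _ _
      linarith
    · rcases hz with rfl | rfl
      · right; rfl
      · left; rfl
end

section
/- Let M := {−1} ∪ [0, 1] ⊆ ℝ, equipped with the metric d(a, b) = |a − b|, and let x = 1 and y = 0. Then for all u, v ∈ M with u ≠ v such that every z ∈ M with d(u, z) + d(z, v) = d(u, v) satisfies z ∈ {u, v}, one has d(x, y) + d(u, v) ≤ min{d(x, u) + d(y, v), d(x, v) + d(y, u)}. (By the paper's characterization of Daugavet points in Lipschitz-free spaces over compact metric spaces, the molecule m_{1,0} is therefore a Daugavet point, although M is not a length space.) -/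
/-- In `M = {-1} ∪ [0,1] ⊆ ℝ` with `x = 1`, `y = 0`: for every pair `u ≠ v` in `M`
whose metric segment in `M` is `{u, v}`, one has
`d(x,y) + d(u,v) ≤ min (d(x,u) + d(y,v)) (d(x,v) + d(y,u))`; hence `m_{1,0}` is a
Daugavet point of the Lipschitz-free space over `M`. -/
theorem daugavet_point_example :
    ∀ u ∈ ({-1} ∪ Set.Icc 0 1 : Set ℝ), ∀ v ∈ ({-1} ∪ Set.Icc 0 1 : Set ℝ), u ≠ v →
      (∀ z ∈ ({-1} ∪ Set.Icc 0 1 : Set ℝ),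
        dist u z + dist z v = dist u v → z = u ∨ z = v) →
      dist (1 : ℝ) 0 + dist u v ≤
        min (dist 1 u + dist 0 v) (dist 1 v + dist 0 u) := by
  intro u hu v hv hne hseg
  -- first: not both in Icc
  have key : ∀ a b : ℝ, a ∈ Set.Icc (0:ℝ) 1 → b ∈ Set.Icc (0:ℝ) 1 → a ≠ b →
      (∀ z ∈ ({-1} ∪ Set.Icc 0 1 : Set ℝ),
        dist a z + dist z b = dist a b → z = a ∨ z = b) → False := by
    intro a b ha hb hab hs
    have hm : (a + b) / 2 ∈ Set.Icc (0:ℝ) 1 := by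
      constructor <;> [nlinarith [ha.1, hb.1]; nlinarith [ha.2, hb.2]]
    have := hs ((a+b)/2) (Or.inr hm) (by
      rw [Real.dist_eq, Real.dist_eq, Real.dist_eq]
      rcases le_total a b with h | h
      · rw [abs_of_nonpos (by linarith), abs_of_nonpos (by linarith),
          abs_of_nonpos (by linarith)]; ring
      · rw [abs_of_nonneg (by linarith), abs_of_nonneg (by linarith),
          abs_of_nonneg (by linarith)]; ring)
    rcases this with h | h
    · exact hab (by linarith)
    · exact hab (by linarith)
  -- reduce to {u,v} = {-1,0}
  have zero01 : ∀ a b : ℝ, a = -1 → b ∈ Set.Icc (0:ℝ) 1 →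
      (∀ z ∈ ({-1} ∪ Set.Icc 0 1 : Set ℝ),
        dist a z + dist z b = dist a b → z = a ∨ z = b) → b = 0 := by
    intro a b ha hb hs
    have := hs 0 (Or.inr ⟨le_refl 0, by norm_num⟩) (by
      subst ha
      rw [Real.dist_eq, Real.dist_eq, Real.dist_eq]
      rw [abs_of_nonpos (by norm_num), abs_of_nonpos (by linarith [hb.1]),
        abs_of_nonpos (by linarith [hb.1])]
      ring)
    rcases this with h | h
    · exact absurd h.symm (by rw [ha]; norm_num)
    · exact h.symm
  have hseg' : ∀ z ∈ ({-1} ∪ Set.Icc 0 1 : Set ℝ),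
      dist v z + dist z u = dist v u → z = v ∨ z = u := by
    intro z hz hd
    rcases hseg z hz (by rw [dist_comm u z, dist_comm z v, dist_comm u v]; linarith) with h | h
    · exact Or.inr h
    · exact Or.inl h
  rcases hu with hu | hu <;> rcases hv with hv | hv
  · exact absurd (hu.trans hv.symm) hne
  · have hv0 := zero01 u v hu hv hseg
    subst hv0; rw [Set.mem_singleton_iff] at hu; subst hu
    simp only [Real.dist_eq]
    norm_num
  · have hu0 := zero01 v u hv hu hseg'
    subst hu0; rw [Set.mem_singleton_iff] at hv; subst hv
    simp only [Real.dist_eq]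
    norm_num
  · exact absurd (key u v hu hv hne hseg) not_false
end
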